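/- There exists a coupling of the empirical distribution and the distribution with density y_N at distance at most the mesh: there is a probability measure μ on ℝ × ℝ whose first marginal is 𝕡_N = (1/N) Σ_{n=1}^N δ_{x_{N,n}} and whose second marginal is the measure with density y_N with respect to Lebesgue measure, such that μ-almost surely |u − v| ≤ δ_N := max_{1 ≤ n ≤ N−1} (x_{N,n} − x_{N,n+1}). -/

import Mathlib

open Finset

/-- Partial sum `S_n = x_1 + ... + x_n`. -/
noncomputable def S (x : ℕ → ℝ) (n : ℕ) : ℝ := ∑ i ∈ Finset.Icc 1 n, x i

/-- `x_1, ..., x_N` is a solution of the recursion `x_{n+1} = x_n - 1/S_n`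
with all relevant partial sums nonzero. -/
def IsSolution (N : ℕ) (x : ℕ → ℝ) : Prop :=
  ∀ n, 1 ≤ n → n ≤ N - 1 → S x n ≠ 0 ∧ x (n + 1) = x n - 1 / S x n

/-- Zero-median property: the middle value is `0` when `N` is odd, and the two middle
values are negatives of each other when `N` is even. -/
def ZeroMedian (N : ℕ) (x : ℕ → ℝ) : Prop :=
  (Odd N → x ((N + 1) / 2) = 0) ∧ (Even N → x (N / 2) = - x (N / 2 + 1))

/-- The piecewise-constant density `y_N`: it equals `S_{N,n}/(N-1)`
(equivalently `1/((N-1)(x_{N,n} - x_{N,n+1}))`) on `[x_{N,n+1}, x_{N,n})` for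
`n = 1, ..., N-1`, and `0` outside `[x_{N,N}, x_{N,1})`. -/
noncomputable def yDen (N : ℕ) (x : ℕ → ℝ) (t : ℝ) : ℝ :=
  ∑ n ∈ Finset.Icc 1 (N - 1), if x (n + 1) ≤ t ∧ t < x n then S x n / ((N : ℝ) - 1) else 0

open MeasureTheory
open scoped ENNReal NNReal

lemma map_finset_sum' {α β ι : Type*} [MeasurableSpace α] [MeasurableSpace β]
    (s : Finset ι) (μ : ι → Measure α) {f : α → β} (hf : Measurable f) :
    (∑ i ∈ s, μ i).map f = ∑ i ∈ s, (μ i).map f := by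
  induction s using Finset.cons_induction with
  | empty => simp
  | cons a s ha ih => rw [Finset.sum_cons, Measure.map_add _ _ hf, ih, Finset.sum_cons]

lemma withDensity_finset_sum' {α ι : Type*} [MeasurableSpace α] (μ : Measure α)
    (s : Finset ι) (f : ι → α → ℝ≥0∞) (hf : ∀ i, Measurable (f i)) :
    μ.withDensity (fun a => ∑ i ∈ s, f i a) = ∑ i ∈ s, μ.withDensity (f i) := by
  induction s using Finset.cons_induction with
  | empty => simp
  | cons a s ha ih =>
    have h : (fun t => ∑ i ∈ Finset.cons a s ha, f i t) = f a + fun t => ∑ i ∈ s, f i t := by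
      funext t; simp [Finset.sum_cons]
    rw [h, withDensity_add_left (hf a), ih, Finset.sum_cons]


/-- There is a coupling `μ` of the empirical distribution `𝕡_N = (1/N) ∑_{n=1}^N δ_{x_{N,n}}`
and the distribution with density `y_N` such that `μ`-almost surely the two coordinates are
within the mesh `δ_N = max_{1 ≤ n ≤ N-1} (x_{N,n} - x_{N,n+1})` of each other. -/
theorem coupling_within_mesh (N : ℕ) (hN : 3 ≤ N) (x : ℕ → ℝ)
    (hsol : IsSolution N x) (hdec : ∀ n, 1 ≤ n → n < N → x (n + 1) < x n)
    (hmean : ∑ i ∈ Finset.Icc 1 N, x i = 0) :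
    ∃ μ : Measure (ℝ × ℝ), IsProbabilityMeasure μ ∧
      μ.map Prod.fst = (N : ℝ≥0∞)⁻¹ • ∑ n ∈ Finset.Icc 1 N, Measure.dirac (x n) ∧
      μ.map Prod.snd = volume.withDensity (fun t => ENNReal.ofReal (yDen N x t)) ∧
      ∀ᵐ p ∂μ, |p.1 - p.2| ≤
        (Finset.Icc 1 (N - 1)).sup' (by rw [Finset.nonempty_Icc]; omega)
          (fun n => x n - x (n + 1)) := by
  classical
  set r : ℝ := (N : ℝ) with hr
  have hr3 : (3 : ℝ) ≤ r := by rw [hr]; exact_mod_cast hN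
  have hrpos : (0 : ℝ) < r := by linarith
  have hr1 : (0 : ℝ) < r - 1 := by linarith
  -- basic facts about the solution
  have hfacts : ∀ n ∈ Finset.Icc 1 (N - 1), 0 < S x n ∧ x n - x (n + 1) = 1 / S x n := by
    intro n hn
    rw [Finset.mem_Icc] at hn
    obtain ⟨hS0, heq⟩ := hsol n hn.1 hn.2
    have hlt : x (n + 1) < x n := hdec n hn.1 (by omega)
    have hdiff : x n - x (n + 1) = 1 / S x n := by rw [heq]; ring
    have hpos : 0 < 1 / S x n := by rw [← hdiff]; linarith
    exact ⟨one_div_pos.mp hpos, hdiff⟩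
  -- the interval measures
  set ν : ℕ → Measure ℝ := fun n =>
    ENNReal.ofReal (S x n / (r - 1)) • volume.restrict (Set.Ico (x (n + 1)) (x n)) with hν
  have hνuniv : ∀ n ∈ Finset.Icc 1 (N - 1), ν n Set.univ = ENNReal.ofReal ((r - 1)⁻¹) := by
    intro n hn
    obtain ⟨hS, hd⟩ := hfacts n hn
    rw [hν]
    simp only [Measure.smul_apply, Measure.restrict_apply_univ, smul_eq_mul]
    rw [Real.volume_Ico, ← ENNReal.ofReal_mul (by positivity), hd]
    congr 1
    field_simp
  have hnle : ∀ n ∈ Finset.Icc 1 (N - 1), (n : ℝ) ≤ r - 1 := by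
    intro n hn
    rw [Finset.mem_Icc] at hn
    have : (n : ℝ) ≤ ((N - 1 : ℕ) : ℝ) := by exact_mod_cast hn.2
    rwa [Nat.cast_sub (by omega), Nat.cast_one, ← hr] at this
  set c : ℕ → ℝ≥0∞ := fun n => ENNReal.ofReal ((r - n) / r) with hc
  set d : ℕ → ℝ≥0∞ := fun n => ENNReal.ofReal ((n : ℝ) / r) with hd
  set μ : Measure (ℝ × ℝ) := ∑ n ∈ Finset.Icc 1 (N - 1),
    (c n • (Measure.dirac (x n)).prod (ν n) + d n • (Measure.dirac (x (n + 1))).prod (ν n))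
    with hμ
  -- first marginal
  have hNinv : (N : ℝ≥0∞)⁻¹ = ENNReal.ofReal ((r - 1) / (r * (r - 1))) := by
    have h1 : (r - 1) / (r * (r - 1)) = r⁻¹ := by field_simp
    rw [h1, ENNReal.ofReal_inv_of_pos hrpos, hr, ENNReal.ofReal_natCast]
  have hfst : μ.map Prod.fst = (N : ℝ≥0∞)⁻¹ • ∑ n ∈ Finset.Icc 1 N, Measure.dirac (x n) := by
    have step1 : μ.map Prod.fst = ∑ n ∈ Finset.Icc 1 (N - 1),
        (ENNReal.ofReal ((r - n) / (r * (r - 1))) • Measure.dirac (x n)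
          + ENNReal.ofReal ((n : ℝ) / (r * (r - 1))) • Measure.dirac (x (n + 1))) := by
      rw [hμ, map_finset_sum' _ _ measurable_fst]
      refine Finset.sum_congr rfl fun n hn => ?_
      rw [Measure.map_add _ _ measurable_fst, Measure.map_smul, Measure.map_smul,
          Measure.map_fst_prod, Measure.map_fst_prod, smul_smul, smul_smul, hνuniv n hn]
      have h1 : c n * ENNReal.ofReal ((r - 1)⁻¹) = ENNReal.ofReal ((r - n) / (r * (r - 1))) := by
        simp only [hc]
        rw [← ENNReal.ofReal_mul (div_nonneg (by linarith [hnle n hn]) hrpos.le)]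
        congr 1
        rw [← div_eq_mul_inv, div_div]
      have h2 : d n * ENNReal.ofReal ((r - 1)⁻¹) = ENNReal.ofReal ((n : ℝ) / (r * (r - 1))) := by
        rw [hd, ← ENNReal.ofReal_mul (by positivity)]
        congr 1
        rw [← div_eq_mul_inv, div_div]
      rw [h1, h2]
    rw [step1]
    -- reindex and recombine
    have hshift : ∑ n ∈ Finset.Icc 1 (N - 1),
        ENNReal.ofReal ((n : ℝ) / (r * (r - 1))) • Measure.dirac (x (n + 1))
        = ∑ n ∈ Finset.Icc 2 N,
          ENNReal.ofReal (((n : ℝ) - 1) / (r * (r - 1))) • Measure.dirac (x n) := by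
      have hmap : (Finset.Icc 1 (N - 1)).map (addRightEmbedding 1) = Finset.Icc 2 N := by
        rw [Finset.map_add_right_Icc]
        congr 1
        omega
      rw [← hmap, Finset.sum_map]
      refine Finset.sum_congr rfl fun n hn => ?_
      simp only [addRightEmbedding_apply]
      congr 2
      push_cast
      ring
    rw [Finset.sum_add_distrib, hshift]
    have e1 : Finset.Icc 1 (N - 1) = insert 1 (Finset.Icc 2 (N - 1)) := by
      ext m; simp only [Finset.mem_Icc, Finset.mem_insert]; omega
    have e2 : Finset.Icc 2 N = insert N (Finset.Icc 2 (N - 1)) := by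
      ext m; simp only [Finset.mem_Icc, Finset.mem_insert]; omega
    have e3 : Finset.Icc 1 N = insert 1 (insert N (Finset.Icc 2 (N - 1))) := by
      ext m; simp only [Finset.mem_Icc, Finset.mem_insert]; omega
    have h1mem : (1 : ℕ) ∉ Finset.Icc 2 (N - 1) := by simp
    have hNmem : N ∉ Finset.Icc 2 (N - 1) := by
      rw [Finset.mem_Icc]; omega
    have h1mem' : (1 : ℕ) ∉ insert N (Finset.Icc 2 (N - 1)) := by
      rw [Finset.mem_insert, Finset.mem_Icc]; omega
    rw [e1, e2, e3, Finset.sum_insert h1mem, Finset.sum_insert hNmem,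
        Finset.sum_insert h1mem', Finset.sum_insert hNmem]
    have hA1 : ENNReal.ofReal ((r - (1 : ℕ)) / (r * (r - 1))) = (N : ℝ≥0∞)⁻¹ := by
      rw [hNinv]; norm_num
    have hBN : ENNReal.ofReal (((N : ℝ) - 1) / (r * (r - 1))) = (N : ℝ≥0∞)⁻¹ := by
      rw [hNinv, hr]
    have hmid : ∀ n ∈ Finset.Icc 2 (N - 1),
        ENNReal.ofReal ((r - n) / (r * (r - 1))) • Measure.dirac (x n)
          + ENNReal.ofReal (((n : ℝ) - 1) / (r * (r - 1))) • Measure.dirac (x n)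
        = (N : ℝ≥0∞)⁻¹ • Measure.dirac (x n) := by
      intro n hn
      rw [Finset.mem_Icc] at hn
      have hn' : (n : ℝ) ≤ r - 1 := by
        have : (n : ℝ) ≤ ((N - 1 : ℕ) : ℝ) := by exact_mod_cast hn.2
        rwa [Nat.cast_sub (by omega), Nat.cast_one, ← hr] at this
      have hn1 : (1 : ℝ) ≤ (n : ℝ) := by
        have : (1 : ℕ) ≤ n := by omega
        exact_mod_cast this
      rw [← add_smul, ← ENNReal.ofReal_add
        (div_nonneg (by linarith) (by positivity)) (div_nonneg (by linarith) (by positivity)),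
        hNinv]
      congr 1
      rw [← add_div]
      congr 1
      ring
    have hmidsum : (∑ n ∈ Finset.Icc 2 (N - 1),
          ENNReal.ofReal ((r - n) / (r * (r - 1))) • Measure.dirac (x n))
        + ∑ n ∈ Finset.Icc 2 (N - 1),
          ENNReal.ofReal (((n : ℝ) - 1) / (r * (r - 1))) • Measure.dirac (x n)
        = ∑ n ∈ Finset.Icc 2 (N - 1), (N : ℝ≥0∞)⁻¹ • Measure.dirac (x n) := by
      rw [← Finset.sum_add_distrib]
      exact Finset.sum_congr rfl hmid
    rw [hA1]
    rw [hBN]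
    rw [smul_add]
    rw [smul_add]
    rw [Finset.smul_sum]
    rw [← hmidsum]
    abel
  -- second marginal
  have hyconv : ∀ n ∈ Finset.Icc 1 (N - 1),
      volume.withDensity ((Set.Ico (x (n + 1)) (x n)).indicator
        fun _ => ENNReal.ofReal (S x n / (r - 1))) = ν n := by
    intro n hn
    rw [withDensity_indicator measurableSet_Ico, withDensity_const]
  have hsnd : μ.map Prod.snd = volume.withDensity (fun t => ENNReal.ofReal (yDen N x t)) := by
    have hfun : (fun t => ENNReal.ofReal (yDen N x t)) = fun t => ∑ n ∈ Finset.Icc 1 (N - 1),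
        (Set.Ico (x (n + 1)) (x n)).indicator
          (fun _ => ENNReal.ofReal (S x n / (r - 1))) t := by
      funext t
      rw [yDen, ENNReal.ofReal_sum_of_nonneg (fun n hn => by
        split
        · exact div_nonneg (hfacts n hn).1.le hr1.le
        · exact le_refl _)]
      refine Finset.sum_congr rfl fun n hn => ?_
      by_cases h : x (n + 1) ≤ t ∧ t < x n
      · rw [if_pos h, Set.indicator_of_mem (Set.mem_Ico.mpr h)]
      · rw [if_neg h, Set.indicator_of_notMem (fun hm => h (Set.mem_Ico.mp hm)),
          ENNReal.ofReal_zero]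
    rw [hfun, withDensity_finset_sum' _ _ _
      (fun n => Measurable.indicator measurable_const measurableSet_Ico)]
    rw [hμ, map_finset_sum' _ _ measurable_snd]
    refine Finset.sum_congr rfl fun n hn => ?_
    rw [Measure.map_add _ _ measurable_snd, Measure.map_smul, Measure.map_smul,
        Measure.map_snd_prod, Measure.map_snd_prod]
    simp only [measure_univ, one_smul]
    rw [← add_smul]
    have hcd : c n + d n = 1 := by
      simp only [hc, hd]
      rw [← ENNReal.ofReal_add (div_nonneg (by linarith [hnle n hn]) hrpos.le)
        (div_nonneg (Nat.cast_nonneg n) hrpos.le), ← add_div,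
        show (r - ↑n + ↑n) = r by ring, div_self hrpos.ne', ENNReal.ofReal_one]
    rw [hcd, one_smul, hyconv n hn]
  -- probability
  have hprob : IsProbabilityMeasure μ := by
    constructor
    have h1 : μ Set.univ = (μ.map Prod.fst) Set.univ := by
      rw [Measure.map_apply measurable_fst MeasurableSet.univ, Set.preimage_univ]
    rw [h1, hfst, Measure.smul_apply, Measure.finset_sum_apply]
    simp only [measure_univ, Finset.sum_const, Nat.card_Icc, smul_eq_mul, nsmul_eq_mul, mul_one]
    rw [show N + 1 - 1 = N by omega]
    exact ENNReal.inv_mul_cancel (by exact_mod_cast Nat.cast_ne_zero.mpr (by omega : N ≠ 0)) (by simp)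
  refine ⟨μ, hprob, hfst, hsnd, ?_⟩
  -- almost sure bound
  rw [ae_iff]
  set δ : ℝ := (Finset.Icc 1 (N - 1)).sup'
    (by rw [Finset.nonempty_Icc]; omega) (fun n => x n - x (n + 1)) with hδdef
  have hbound : ∀ n ∈ Finset.Icc 1 (N - 1), ∀ a : ℝ, a = x n ∨ a = x (n + 1) →
      (Measure.dirac a).prod (ν n) {p : ℝ × ℝ | ¬ |p.1 - p.2| ≤ δ} = 0 := by
    intro n hn a ha
    have hxd : x n - x (n + 1) ≤ δ := by
      rw [hδdef]; exact Finset.le_sup' (fun n => x n - x (n + 1)) hn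
    have hnn := Finset.mem_Icc.mp hn
    have hlt : x (n + 1) < x n := hdec n hnn.1 (by omega)
    refine le_antisymm ?_ zero_le
    have hgood : ∀ p : ℝ × ℝ, p.1 = a → p.2 ∈ Set.Ico (x (n + 1)) (x n) →
        |p.1 - p.2| ≤ δ := by
      intro p h1 h2
      rw [Set.mem_Ico] at h2
      rw [abs_le]
      rcases ha with ha | ha <;> subst ha <;> rw [h1] <;> constructor <;> linarith
    have hsub : {p : ℝ × ℝ | ¬ |p.1 - p.2| ≤ δ} ⊆
        (({a}ᶜ : Set ℝ) ×ˢ (Set.univ : Set ℝ)) ∪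
        ((Set.univ : Set ℝ) ×ˢ (Set.Ico (x (n + 1)) (x n))ᶜ) := by
      intro p hp
      rcases eq_or_ne p.1 a with h | h
      · exact Or.inr ⟨Set.mem_univ _, fun hmem => hp (hgood p h hmem)⟩
      · exact Or.inl ⟨h, Set.mem_univ _⟩
    refine (measure_mono hsub).trans ((measure_union_le _ _).trans ?_)
    have hz1 : (Measure.dirac a).prod (ν n) (({a}ᶜ : Set ℝ) ×ˢ (Set.univ : Set ℝ)) = 0 := by
      rw [Measure.prod_prod, Measure.dirac_apply]
      simp
    have hz2 : (Measure.dirac a).prod (ν n)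
        ((Set.univ : Set ℝ) ×ˢ (Set.Ico (x (n + 1)) (x n))ᶜ) = 0 := by
      rw [Measure.prod_prod]
      have : ν n (Set.Ico (x (n + 1)) (x n))ᶜ = 0 := by
        rw [hν]
        simp only [Measure.smul_apply, smul_eq_mul]
        rw [Measure.restrict_apply measurableSet_Ico.compl, Set.compl_inter_self,
          measure_empty, mul_zero]
      rw [this, mul_zero]
    rw [hz1, hz2, add_zero]
  rw [hμ, Measure.finset_sum_apply]
  refine Finset.sum_eq_zero fun n hn => ?_
  rw [Measure.add_apply, Measure.smul_apply, Measure.smul_apply,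
      hbound n hn _ (Or.inl rfl), hbound n hn _ (Or.inr rfl)]
  simp
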